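/- For any d_0 ∈ ℕ there exist d_1, d_2 ∈ ℕ and floating-point affine transformations φ_1 : 𝔽̄^{d_0} → 𝔽̄^{d_1} and φ_2 : 𝔽̄^{d_1} → 𝔽̄^{d_2} such that the map f : 𝔽^{d_0} → 𝔽^{d_2} defined by f(x) = ρ(φ_2(ρ(φ_1(x)))) is injective on 𝔽^{d_0}, satisfies f(𝔽^{d_0}) ⊆ ([0, 2^{e_max}] ∩ 𝔽)^{d_2}, and all values appearing in the intermediate computation (every coordinate of φ_1(x), ρ(φ_1(x)), φ_2(ρ(φ_1(x))), including every left-associative partial sum in the floating-point matrix–vector products) are finite for every x ∈ 𝔽^{d_0}. -/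

import Mathlib

open scoped Classical

namespace FPT

noncomputable section

/-- Minimal exponent `𝔢_min = -2^(q-1) + 2`. -/
def emin (q : ℕ) : ℤ := -(2 ^ (q - 1) : ℤ) + 2

/-- Maximal exponent `𝔢_max = 2^(q-1) - 1`. -/
def emax (q : ℕ) : ℤ := (2 ^ (q - 1) : ℤ) - 1

/-- The set of finite floating-point numbers with `p` mantissa bits and exponent bits `q`:
normal numbers `±(1.m₁⋯m_p)·2^e = m·2^(e-p)` with `2^p ≤ |m| ≤ 2^(p+1)-1` and
`emin ≤ e ≤ emax`, together with subnormal numbers `±(0.m₁⋯m_p)·2^emin = m·2^(emin-p)`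
with `|m| ≤ 2^p - 1`. -/
def Fset (p q : ℕ) : Set ℝ :=
  {x | ∃ m e : ℤ, |m| ≤ 2 ^ (p + 1) - 1 ∧ emin q ≤ e ∧ e ≤ emax q ∧
      ((2 : ℤ) ^ p ≤ |m| ∨ e = emin q) ∧ x = (m : ℝ) * (2 : ℝ) ^ (e - (p : ℤ))}

/-- The largest positive float `Ω = (2 - 2^(-p))·2^emax`. -/
def Omega (p q : ℕ) : ℝ := (2 - (2 : ℝ) ^ (-(p : ℤ))) * (2 : ℝ) ^ (emax q)

/-- Overflow threshold `Ω + 2^(emax - p - 1)`. -/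
def thr (p q : ℕ) : ℝ := Omega p q + (2 : ℝ) ^ (emax q - (p : ℤ) - 1)

/-- `y` is a float whose last mantissa bit `m_p` is zero, i.e. `y = m·2^(e-p)` with `m` even. -/
def EvenMantissa (p q : ℕ) (y : ℝ) : Prop :=
  ∃ m e : ℤ, |m| ≤ 2 ^ (p + 1) - 1 ∧ emin q ≤ e ∧ e ≤ emax q ∧
    ((2 : ℤ) ^ p ≤ |m| ∨ e = emin q) ∧ y = (m : ℝ) * (2 : ℝ) ^ (e - (p : ℤ)) ∧ 2 ∣ m

/-- `RoundsTo p q x y` : `y` is the rounding of `x` to the nearest float, ties to even. -/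
def RoundsTo (p q : ℕ) (x y : ℝ) : Prop :=
  y ∈ Fset p q ∧ (∀ z ∈ Fset p q, |x - y| ≤ |x - z|) ∧
    ((∀ z ∈ Fset p q, |x - z| = |x - y| → z = y) ∨ EvenMantissa p q y)

/-- Extended floats `𝔽̄ = 𝔽 ∪ {-∞, +∞, NaN}` (the payload of `fin` is meant to lie in `Fset`). -/
inductive EF where
  | fin : ℝ → EF
  | pinf : EF
  | ninf : EF
  | nan : EF

/-- Rounding `⌊·⌉ : ℝ → 𝔽̄`. -/
def rnd (p q : ℕ) (x : ℝ) : EF :=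
  if thr p q ≤ x then .pinf
  else if x ≤ -thr p q then .ninf
  else .fin (Classical.epsilon (RoundsTo p q x))

/-- Floating-point addition `⊕`. -/
def fadd (p q : ℕ) : EF → EF → EF
  | .nan, _ => .nan
  | _, .nan => .nan
  | .fin x, .fin y => rnd p q (x + y)
  | .fin _, .pinf => .pinf
  | .fin _, .ninf => .ninf
  | .pinf, .fin _ => .pinf
  | .ninf, .fin _ => .ninf
  | .pinf, .pinf => .pinf
  | .ninf, .ninf => .ninf
  | .pinf, .ninf => .nan
  | .ninf, .pinf => .nan

/-- Floating-point multiplication `⊗`. -/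
def fmul (p q : ℕ) : EF → EF → EF
  | .nan, _ => .nan
  | _, .nan => .nan
  | .fin x, .fin y => rnd p q (x * y)
  | .fin x, .pinf => if 0 < x then .pinf else if x < 0 then .ninf else .nan
  | .fin x, .ninf => if 0 < x then .ninf else if x < 0 then .pinf else .nan
  | .pinf, .fin y => if 0 < y then .pinf else if y < 0 then .ninf else .nan
  | .ninf, .fin y => if 0 < y then .ninf else if y < 0 then .pinf else .nan
  | .pinf, .pinf => .pinf
  | .ninf, .ninf => .pinf
  | .pinf, .ninf => .ninf
  | .ninf, .pinf => .ninf

/-- Floating-point subtraction `x ⊖ y = x ⊕ ((-1) ⊗ y)`. -/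
def fsub (p q : ℕ) (x y : EF) : EF := fadd p q x (fmul p q (.fin (-1)) y)

/-- Floating-point division (defined for `0 ≤ x ≤ y < ∞`, `y > 0`; NaN propagates). -/
def fdiv (p q : ℕ) : EF → EF → EF
  | _, .nan => .nan
  | .nan, _ => .nan
  | .fin x, .fin y => if 0 < y then rnd p q (x / y) else .nan
  | _, _ => .nan

/-- Correctly rounded exponential `⌊exp⌉`. -/
def fexp (p q : ℕ) : EF → EF
  | .fin x => rnd p q (Real.exp x)
  | .pinf => .pinf
  | .ninf => .fin 0
  | .nan => .nan

/-- Correctly rounded ReLU `ρ = ⌊ReLU⌉`. -/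
def frelu (p q : ℕ) : EF → EF
  | .fin x => rnd p q (max x 0)
  | .pinf => .pinf
  | .ninf => .fin 0
  | .nan => .nan

/-- Left-associative floating-point sum of a list (empty sum is `0`). -/
def fsuml (p q : ℕ) : List EF → EF
  | [] => .fin 0
  | x :: xs => xs.foldl (fadd p q) x

/-- Left-associative floating-point sum `⊕_{i=1}^{n} v i` over `Fin n`. -/
def fsum (p q : ℕ) {n : ℕ} (v : Fin n → EF) : EF := fsuml p q ((List.finRange n).map v)

/-- Matrices of extended floats. -/
abbrev Mat (a b : ℕ) := Fin a → Fin b → EF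

/-- Entrywise floating-point matrix addition. -/
def madd (p q : ℕ) {a b : ℕ} (M N : Mat a b) : Mat a b := fun i j => fadd p q (M i j) (N i j)

/-- Floating-point matrix multiplication with left-associative inner sums. -/
def mmul (p q : ℕ) {a b c : ℕ} (M : Mat a b) (N : Mat b c) : Mat a c :=
  fun i k => fsum p q (fun j => fmul p q (M i j) (N j k))

/-- Maximum of two extended floats (NaN-propagating). -/
def emax2 : EF → EF → EF
  | .nan, _ => .nan
  | _, .nan => .nan
  | .pinf, _ => .pinf
  | _, .pinf => .pinf
  | .fin x, .fin y => .fin (max x y)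
  | .fin x, .ninf => .fin x
  | .ninf, y => y

/-- Maximum entry of a vector of extended floats. -/
def vmax {n : ℕ} (v : Fin n → EF) : EF := ((List.finRange n).map v).foldl emax2 .ninf

/-- Floating-point softmax `σ(x)_i = ⌊exp⌉(x_i ⊖ x_*) ⊘ (⊕_j ⌊exp⌉(x_j ⊖ x_*))`. -/
def fsoftmax (p q : ℕ) {n : ℕ} (v : Fin n → EF) : Fin n → EF := fun i =>
  fdiv p q (fexp p q (fsub p q (v i) (vmax v)))
    (fsum p q (fun j => fexp p q (fsub p q (v j) (vmax v))))

/-- Column-wise application of the floating-point softmax. -/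
def colSoftmax (p q : ℕ) {k n : ℕ} (A : Mat k n) : Mat k n :=
  fun i j => fsoftmax p q (fun i' => A i' j) i

/-- The extended float is a finite float in `𝔽`. -/
def EF.IsF (p q : ℕ) : EF → Prop
  | .fin x => x ∈ Fset p q
  | _ => False

/-- The extended float is a well-formed element of `𝔽̄`. -/
def EF.Valid (p q : ℕ) : EF → Prop
  | .fin x => x ∈ Fset p q
  | _ => True

/-- The extended float is finite (not `±∞` or NaN). -/
def EF.Finite : EF → Prop
  | .fin _ => True
  | _ => False

/-- All entries of a vector are finite floats. -/
def VecFin (p q : ℕ) {a : ℕ} (v : Fin a → EF) : Prop := ∀ i, (v i).IsF p q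

/-- All entries of a matrix are finite floats. -/
def MatFin (p q : ℕ) {a b : ℕ} (M : Mat a b) : Prop := ∀ i j, (M i j).IsF p q

/-- Embed a real matrix as a matrix of extended floats. -/
def toEF {a b : ℕ} (M : Fin a → Fin b → ℝ) : Mat a b := fun i j => .fin (M i j)

/-- Parameters of one transformer block (attention layer followed by feed-forward layer)
with `h` heads, head dimension `m`, feed-forward width `r`, hidden dimension `d`. -/
structure Block (h m r d : ℕ) where
  WK : Fin h → Fin m → Fin d → ℝ
  WQ : Fin h → Fin m → Fin d → ℝ
  WV : Fin h → Fin m → Fin d → ℝ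
  WO : Fin h → Fin d → Fin m → ℝ
  W1 : Fin r → Fin d → ℝ
  W2 : Fin d → Fin r → ℝ
  b1 : Fin r → ℝ
  b2 : Fin d → ℝ

/-- All parameters of the block are floats. -/
def Block.Valid (p q : ℕ) {h m r d : ℕ} (B : Block h m r d) : Prop :=
  (∀ i a b, B.WK i a b ∈ Fset p q) ∧ (∀ i a b, B.WQ i a b ∈ Fset p q) ∧
    (∀ i a b, B.WV i a b ∈ Fset p q) ∧ (∀ i a b, B.WO i a b ∈ Fset p q) ∧
    (∀ a b, B.W1 a b ∈ Fset p q) ∧ (∀ a b, B.W2 a b ∈ Fset p q) ∧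
    (∀ a, B.b1 a ∈ Fset p q) ∧ (∀ a, B.b2 a ∈ Fset p q)

/-- The attention layer
`AT(X) = X ⊕ (⊕_i W_i^O ⊗ ((W_i^V ⊗ X) ⊗ σ((W_i^K ⊗ X)ᵀ ⊗ (W_i^Q ⊗ X))))`. -/
def attnApply (p q : ℕ) {h m r d : ℕ} (B : Block h m r d) {n : ℕ} (X : Mat d n) : Mat d n :=
  madd p q X (fun a b =>
    fsum p q (fun i =>
      (mmul p q (toEF (B.WO i))
        (mmul p q (mmul p q (toEF (B.WV i)) X)
          (colSoftmax p q
            (mmul p q (fun u v => mmul p q (toEF (B.WK i)) X v u)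
              (mmul p q (toEF (B.WQ i)) X))))) a b))

/-- The feed-forward layer `FF(X) = X ⊕ (W₂ ⊗ ρ(W₁ ⊗ X ⊕ b₁1ᵀ) ⊕ b₂1ᵀ)`. -/
def ffApply (p q : ℕ) {h m r d : ℕ} (B : Block h m r d) {n : ℕ} (X : Mat d n) : Mat d n :=
  madd p q X
    (madd p q
      (mmul p q (toEF B.W2)
        (fun i j => frelu p q
          ((madd p q (mmul p q (toEF B.W1) X) (fun a _ => .fin (B.b1 a))) i j)))
      (fun a _ => .fin (B.b2 a)))

/-- One transformer block: `FF ∘ AT`. -/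
def Block.apply (p q : ℕ) {h m r d n : ℕ} (B : Block h m r d) (X : Mat d n) : Mat d n :=
  ffApply p q B (attnApply p q B X)

/-- Composition of a list of transformer blocks (applied from left to right). -/
def blocksApply (p q : ℕ) {h m r d n : ℕ} (L : List (Block h m r d)) (X : Mat d n) : Mat d n :=
  L.foldl (fun Y B => Block.apply p q B Y) X

/-- `f` is a floating-point transformer:
`f(X) = W_out ⊗ g(W_in ⊗ X ⊕ b_in 1ᵀ) ⊕ b_out 1ᵀ` with `g` a nonempty composition of
transformer blocks and all parameters finite floats. -/
def IsTransformer (p q din dout n : ℕ) (f : Mat din n → Mat dout n) : Prop :=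
  ∃ (h m r d : ℕ) (L : List (Block h m r d)) (Win : Fin d → Fin din → ℝ) (bin : Fin d → ℝ)
      (Wout : Fin dout → Fin d → ℝ) (bout : Fin dout → ℝ),
    0 < h ∧ 0 < m ∧ 0 < r ∧ 0 < d ∧ L ≠ [] ∧ (∀ B ∈ L, B.Valid p q) ∧
      (∀ i j, Win i j ∈ Fset p q) ∧ (∀ i, bin i ∈ Fset p q) ∧
      (∀ i j, Wout i j ∈ Fset p q) ∧ (∀ i, bout i ∈ Fset p q) ∧
      ∀ X : Mat din n,
        f X = madd p q
          (mmul p q (toEF Wout)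
            (blocksApply p q L
              (madd p q (mmul p q (toEF Win) X) (fun i _ => .fin (bin i)))))
          (fun i _ => .fin (bout i))

/-- Column permutation: column `j` of `permCols π X` is column `π j` of `X`. -/
def permCols {a n : ℕ} (π : Equiv.Perm (Fin n)) (X : Mat a n) : Mat a n := fun i j => X i (π j)

/-- The transposition `π_{(1,2)}^n` of the first two coordinates. -/
def swap12 (n : ℕ) (hn : 2 ≤ n) : Equiv.Perm (Fin n) :=
  Equiv.swap ⟨0, by omega⟩ ⟨1, by omega⟩

/-- The columns of `X` are pairwise distinct. -/
def DistinctCols {a n : ℕ} (X : Mat a n) : Prop :=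
  ∀ j k : Fin n, j ≠ k → ∃ i, X i j ≠ X i k

/-- `(α,β)`-similarity (with 1-based column index `i = j+1`). -/
def Similar {a n : ℕ} (α β : ℕ) (X Y : Mat a n) : Prop :=
  ∃ z1 z2 : Fin a → EF,
    (∀ j : Fin n, (j : ℕ) + 1 ≤ α → ∀ i, X i j = z1 i) ∧
    (∀ j : Fin n, α < (j : ℕ) + 1 → (j : ℕ) + 1 ≤ β → ∀ i, X i j = z2 i) ∧
    (∀ j : Fin n, (j : ℕ) + 1 < α → ∀ i, Y i j = z1 i) ∧
    (∀ j : Fin n, α ≤ (j : ℕ) + 1 → (j : ℕ) + 1 ≤ β → ∀ i, Y i j = z2 i) ∧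
    (∀ j : Fin n, β < (j : ℕ) + 1 → ∀ i, X i j = Y i j)

/-- The smallest float strictly greater than `x` (junk value if none exists). -/
def succF (p q : ℕ) (x : ℝ) : ℝ := sInf {y | y ∈ Fset p q ∧ x < y}

/-- Successor on extended floats: the smallest element of `𝔽 ∪ {+∞}` strictly above. -/
def succEF (p q : ℕ) : EF → EF
  | .fin r => if ∃ y ∈ Fset p q, r < y then .fin (succF p q r) else .pinf
  | e => e

/-- Floating-point affine transformation `φ(x) = W ⊗ x ⊕ b`. -/
def affApply (p q : ℕ) {a b : ℕ} (W : Fin b → Fin a → ℝ) (c : ℝ) (v : Fin a → EF) :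
    Fin b → EF :=
  fun i => fadd p q (fsum p q (fun j => fmul p q (.fin (W i j)) (v j))) (.fin c)

/-- All intermediate values of `φ(x) = W ⊗ x ⊕ b` on input `v`, including every
left-associative partial sum of the matrix–vector product, are finite. -/
def AffIntermFin (p q : ℕ) {a b : ℕ} (W : Fin b → Fin a → ℝ) (c : ℝ) (v : Fin a → EF) : Prop :=
  ∀ i : Fin b,
    (∀ k : ℕ,
      (fsuml p q (((List.finRange a).take k).map
        (fun j => fmul p q (.fin (W i j)) (v j)))).Finite) ∧
    (affApply p q W c v i).Finite

end
end FPT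

section Aux
namespace FPT
variable {p q : ℕ}

lemma emax_ge (hp : 2 ≤ p) (hpq : (p : ℤ) ≤ 2 ^ (q - 1) - 3) : (p:ℤ) + 2 ≤ emax q := by
  unfold emax; omega

lemma emin_eq : emin q = 1 - emax q := by unfold emin emax; ring

lemma two_zpow_pos {e : ℤ} : (0:ℝ) < (2:ℝ) ^ e := zpow_pos two_pos e

lemma two_zpow_mono {e e' : ℤ} (h : e ≤ e') : (2:ℝ) ^ e ≤ (2:ℝ) ^ e' :=
  zpow_le_zpow_right₀ one_le_two h

lemma zero_mem (hq : emin q ≤ emax q) : (0:ℝ) ∈ Fset p q := by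
  refine ⟨0, emin q, ?_, le_refl _, hq, Or.inr rfl, by simp⟩
  have : (0:ℤ) < 2 ^ (p+1) := by positivity
  simp only [abs_zero]; omega

lemma neg_mem {x : ℝ} (hx : x ∈ Fset p q) : -x ∈ Fset p q := by
  obtain ⟨m, e, h1, h2, h3, h4, h5⟩ := hx
  refine ⟨-m, e, by simpa using h1, h2, h3, by simpa using h4, ?_⟩
  rw [h5]; push_cast; ring

lemma pow2_mem {e : ℤ} (h1 : emin q ≤ e) (h2 : e ≤ emax q) : (2:ℝ) ^ e ∈ Fset p q := by
  have habs : |(2:ℤ) ^ p| = 2 ^ p := abs_of_nonneg (by positivity)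
  have hle : (2:ℤ) ^ p ≤ 2 ^ (p+1) := pow_le_pow_right₀ (by norm_num) (by omega)
  have hlt : (0:ℤ) < 2 ^ p := by positivity
  refine ⟨2 ^ p, e, ?_, h1, h2, Or.inl (le_of_eq habs.symm), ?_⟩
  · rw [habs]; omega
  · push_cast
    rw [← zpow_natCast (2:ℝ) p, ← zpow_add₀ (by norm_num : (2:ℝ) ≠ 0)]
    ring_nf


lemma two_pow_int_pos : (0:ℤ) < 2 ^ (p+1) - 1 := by
  have h2 : (2:ℤ) ≤ 2 ^ (p+1) := by
    calc (2:ℤ) = 2^1 := by norm_num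
    _ ≤ 2^(p+1) := pow_le_pow_right₀ (by norm_num) (by omega)
  omega

lemma Omega_eq : Omega p q = (((2:ℤ)^(p+1) - 1 : ℤ) : ℝ) * (2:ℝ) ^ (emax q - (p:ℤ)) := by
  have h2 : (2:ℝ) ≠ 0 := two_ne_zero
  have hA : (2:ℝ) ^ (p:ℤ) ≠ 0 := zpow_ne_zero _ h2
  unfold Omega
  push_cast
  rw [← zpow_natCast (2:ℝ) (p+1)]
  push_cast
  rw [zpow_sub₀ h2, zpow_add₀ h2, zpow_one, zpow_neg]
  field_simp

lemma abs_le_Omega {x : ℝ} (hx : x ∈ Fset p q) : |x| ≤ Omega p q := by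
  obtain ⟨m, e, h1, h2, h3, h4, h5⟩ := hx
  rw [Omega_eq, h5, abs_mul, abs_of_pos (two_zpow_pos (e := e - p))]
  have hm : |(m:ℝ)| ≤ (((2:ℤ)^(p+1) - 1 : ℤ) : ℝ) := by
    rw [← Int.cast_abs]; exact_mod_cast h1
  have hz : (2:ℝ) ^ (e - (p:ℤ)) ≤ (2:ℝ) ^ (emax q - (p:ℤ)) := two_zpow_mono (by omega)
  have h0' : (0:ℝ) ≤ (((2:ℤ)^(p+1) - 1 : ℤ) : ℝ) := by
    exact_mod_cast le_of_lt (two_pow_int_pos (p := p))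
  exact mul_le_mul hm hz (le_of_lt (two_zpow_pos)) h0'

lemma Omega_pos : 0 < Omega p q := by
  rw [Omega_eq]
  exact mul_pos (by exact_mod_cast two_pow_int_pos (p := p)) two_zpow_pos

lemma Omega_lt_thr : Omega p q < thr p q := by
  unfold thr
  have := two_zpow_pos (e := emax q - (p:ℤ) - 1)
  linarith

lemma mem_grid {k : ℤ} (hk : |k| ≤ 2^(p+1) - 1) (hq : emin q ≤ emax q) :
    (k:ℝ) * (2:ℝ) ^ (emin q - (p:ℤ)) ∈ Fset p q :=
  ⟨k, emin q, hk, le_refl _, hq, Or.inr rfl, rfl⟩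

lemma eq_int_mul_sigma {x : ℝ} (hx : x ∈ Fset p q) :
    ∃ M : ℤ, x = (M:ℝ) * (2:ℝ) ^ (emin q - (p:ℤ)) := by
  obtain ⟨m, e, h1, h2, h3, h4, h5⟩ := hx
  refine ⟨m * 2 ^ (e - emin q).toNat, ?_⟩
  rw [h5]
  push_cast
  rw [← zpow_natCast (2:ℝ) (e - emin q).toNat, Int.toNat_of_nonneg (by omega),
    mul_assoc, ← zpow_add₀ (by norm_num : (2:ℝ) ≠ 0)]
  ring_nf


lemma sigma_pos : (0:ℝ) < (2:ℝ) ^ (emin q - (p:ℤ)) := two_zpow_pos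

lemma Omega_ge_pow : (2:ℝ) ^ (emax q) ≤ Omega p q := by
  unfold Omega
  have h1 : (2:ℝ) ^ (-(p:ℤ)) ≤ 1 := by
    calc (2:ℝ) ^ (-(p:ℤ)) ≤ (2:ℝ) ^ (0:ℤ) := two_zpow_mono (by omega)
    _ = 1 := zpow_zero 2
  nlinarith [two_zpow_pos (e := emax q)]

lemma Omega_half_le (hE : (p:ℤ) + 2 ≤ emax q) : Omega p q / 2 ≤ (2:ℝ) ^ (emax q) := by
  unfold Omega
  have h1 : (0:ℝ) < (2:ℝ) ^ (-(p:ℤ)) := two_zpow_pos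
  nlinarith [two_zpow_pos (e := emax q)]

lemma roundsTo_self {x : ℝ} (hx : x ∈ Fset p q) : RoundsTo p q x x := by
  refine ⟨hx, fun z hz => by simp [abs_nonneg], Or.inl fun z hz h => ?_⟩
  simp only [sub_self, abs_zero] at h
  have := abs_eq_zero.mp h
  linarith

lemma rnd_spec {x : ℝ} (hex : ∃ y, RoundsTo p q x y) (h1 : ¬ thr p q ≤ x)
    (h2 : ¬ x ≤ -thr p q) : ∃ a, rnd p q x = .fin a ∧ RoundsTo p q x a := by
  unfold rnd
  rw [if_neg h1, if_neg h2]
  exact ⟨_, rfl, Classical.epsilon_spec hex⟩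

lemma thr_bound {x : ℝ} (hx : |x| ≤ Omega p q) :
    (¬ thr p q ≤ x) ∧ (¬ x ≤ -thr p q) := by
  have h := Omega_lt_thr (p := p) (q := q)
  rw [abs_le] at hx
  constructor <;> intro hc <;> linarith [hx.1, hx.2]

lemma rnd_mem {x : ℝ} (hx : x ∈ Fset p q) : rnd p q x = .fin x := by
  have habs := abs_le_Omega hx
  obtain ⟨h1, h2⟩ := thr_bound habs
  obtain ⟨a, ha, hR⟩ := rnd_spec ⟨x, roundsTo_self hx⟩ h1 h2
  have hle := hR.2.1 x hx
  simp only [sub_self, abs_zero] at hle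
  have : |x - a| = 0 := le_antisymm hle (abs_nonneg _)
  have : x = a := by have := abs_eq_zero.mp this; linarith
  rw [ha, ← this]

lemma mem_grid2 (hE : (p:ℤ) + 2 ≤ emax q) {k : ℤ} (hk : |k| ≤ 2^(p+1)) :
    (k:ℝ) * (2:ℝ) ^ (emin q - (p:ℤ)) ∈ Fset p q := by
  have hq : emin q ≤ emax q := by rw [emin_eq]; omega
  rcases lt_or_eq_of_le hk with h | h
  · exact mem_grid (by omega) hq
  · have hcase : k = 2^(p+1) ∨ k = -(2^(p+1)) := by
      rcases abs_cases k with ⟨h1, _⟩ | ⟨h1, _⟩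
      · left; omega
      · right; omega
    have hzp : (2:ℝ) ^ (emin q + 1 - (p:ℤ)) = 2 * (2:ℝ) ^ (emin q - (p:ℤ)) := by
      rw [show emin q + 1 - (p:ℤ) = (emin q - (p:ℤ)) + 1 by ring,
        zpow_add_one₀ (by norm_num : (2:ℝ) ≠ 0)]
      ring
    have habs : |(2:ℤ)^p| ≤ 2^(p+1) - 1 := by
      rw [abs_of_nonneg (by positivity : (0:ℤ) ≤ 2^p)]
      have : (2:ℤ)^(p+1) = 2 * 2^p := by ring
      have : (0:ℤ) < 2^p := by positivity
      omega
    have hemin1 : emin q + 1 ≤ emax q := by rw [emin_eq]; omega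
    rcases hcase with h | h
    · refine ⟨2^p, emin q + 1, habs, by omega, hemin1,
        Or.inl (le_of_eq (abs_of_nonneg (by positivity : (0:ℤ) ≤ 2^p)).symm), ?_⟩
      rw [h, hzp]
      push_cast
      ring
    · refine ⟨-(2^p), emin q + 1, by simpa using habs, by omega, hemin1,
        Or.inl (by rw [abs_neg, abs_of_nonneg (by positivity : (0:ℤ) ≤ 2^p)]), ?_⟩
      rw [h, hzp]
      push_cast
      ring

set_option maxHeartbeats 1000000 in
lemma rnd_half (hp : 2 ≤ p) (hE : (p:ℤ) + 2 ≤ emax q) {u : ℝ} (hu : u ∈ Fset p q) :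
    ∃ a : ℝ, rnd p q (u/2) = .fin a ∧ a ∈ Fset p q ∧ |a| ≤ Omega p q / 2 ∧
      2*a ∈ Fset p q ∧ (u - 2*a) ∈ Fset p q ∧ |u - 2*a| ≤ (2:ℝ)^(emin q - (p:ℤ)) ∧
      (0 ≤ u → 0 ≤ a) ∧ (u ≤ 0 → a ≤ 0) := by
  have hq : emin q ≤ emax q := by rw [emin_eq]; omega
  set σ : ℝ := (2:ℝ)^(emin q - (p:ℤ)) with hσ
  have hσpos : (0:ℝ) < σ := two_zpow_pos
  have hb2 : (2:ℤ) ^ (p+1) = 2 * 2^p := by ring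
  have hPpos : (0:ℤ) < 2^p := by positivity
  have key : (u/2 ∈ Fset p q) ∨
      (∃ k : ℤ, u = ((2*k+1 : ℤ) : ℝ) * σ ∧ |2*k+1| ≤ 2^(p+1) - 1) := by
    obtain ⟨m, e, h1, h2, h3, h4, h5⟩ := hu
    by_cases he : e = emin q
    · rcases Int.even_or_odd m with ⟨c, hc⟩ | ⟨c, hc⟩
      · left
        refine ⟨c, emin q, ?_, le_refl _, hq, Or.inr rfl, ?_⟩
        · have h1' : 2 * |c| ≤ 2^(p+1) - 1 := by
            rw [hc, ← two_mul, abs_mul, abs_two] at h1; exact h1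
          have hc0 : 0 ≤ |c| := abs_nonneg c
          omega
        · rw [h5, he, hc]; push_cast; ring
      · right
        refine ⟨c, ?_, by rw [← hc]; exact h1⟩
        rw [h5, he, hc]
    · left
      have h4' : (2:ℤ)^p ≤ |m| := h4.resolve_right he
      refine ⟨m, e - 1, h1, by omega, by omega, Or.inl h4', ?_⟩
      rw [h5]
      have hzz : (2:ℝ) ^ (e - 1 - (p:ℤ)) = (2:ℝ) ^ (e - (p:ℤ)) / 2 := by
        rw [eq_div_iff (by norm_num : (2:ℝ) ≠ 0), ← zpow_add_one₀ (by norm_num : (2:ℝ) ≠ 0)]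
        ring_nf
      rw [hzz]; ring
  rcases key with hexact | ⟨k, hk, hkb⟩
  · have h1 : 2 * (u/2) = u := by ring
    have h2 : u - 2*(u/2) = 0 := by ring
    refine ⟨u/2, rnd_mem hexact, hexact, ?_, by rw [h1]; exact hu,
      by rw [h2]; exact zero_mem hq, by rw [h2]; simp [le_of_lt hσpos],
      fun h => by linarith, fun h => by linarith⟩
    have := abs_le_Omega hu
    rw [abs_div, abs_two]
    linarith
  · -- odd case
    have hk1 : -(2^p) ≤ k ∧ k ≤ 2^p - 1 := by
      have h := abs_le.mp hkb
      omega
    set k' : ℤ := if 2 ∣ k then k else k + 1 with hk'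
    have hk'near : k' = k ∨ k' = k + 1 := by
      by_cases h : 2 ∣ k <;> simp [hk', h]
    have hk'even : 2 ∣ k' := by
      by_cases h : 2 ∣ k
      · simpa [hk', h] using h
      · simp only [hk', if_neg h]; omega
    have hk'abs : |k'| ≤ 2^p := by
      rcases hk'near with h | h <;> rcases abs_cases k' with ⟨h2, _⟩ | ⟨h2, _⟩ <;> omega
    have hk'grid : ((k':ℤ):ℝ) * σ ∈ Fset p q := mem_grid (by omega) hq
    have hdist : |u/2 - (k':ℝ)*σ| = σ/2 := by
      rcases hk'near with h | h
      · have heq : u/2 - (k':ℝ)*σ = σ/2 := by rw [h, hk]; push_cast; ring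
        rw [heq, abs_of_pos (by linarith)]
      · have heq : u/2 - (k':ℝ)*σ = -(σ/2) := by rw [h, hk]; push_cast; ring
        rw [heq, abs_neg, abs_of_pos (by linarith)]
    have hmin : ∀ z ∈ Fset p q, σ/2 ≤ |u/2 - z| := by
      intro z hz
      obtain ⟨M, hM⟩ := eq_int_mul_sigma hz
      have heq : u/2 - z = ((2*k+1-2*M : ℤ):ℝ) * (σ/2) := by
        rw [hM, hk]; push_cast; ring
      have hne : (1:ℤ) ≤ |2*k+1-2*M| := by
        rcases abs_cases (2*k+1-2*M) with ⟨h2, _⟩ | ⟨h2, _⟩ <;> omega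
      have hne' : (1:ℝ) ≤ |((2*k+1-2*M : ℤ):ℝ)| := by
        rw [← Int.cast_abs]; exact_mod_cast hne
      rw [heq, abs_mul, abs_of_pos (by linarith : (0:ℝ) < σ/2)]
      nlinarith
    have hevenM : EvenMantissa p q ((k':ℝ)*σ) :=
      ⟨k', emin q, by omega, le_refl _, hq, Or.inr rfl, rfl, hk'even⟩
    have hRT : RoundsTo p q (u/2) ((k':ℝ)*σ) :=
      ⟨hk'grid, fun z hz => by rw [hdist]; exact hmin z hz, Or.inr hevenM⟩
    have huabs : |u| ≤ Omega p q := abs_le_Omega hu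
    have habs2 : |u/2| ≤ Omega p q := by
      rw [abs_div, abs_two]
      have := Omega_pos (p := p) (q := q)
      linarith
    obtain ⟨hth1, hth2⟩ := thr_bound habs2
    obtain ⟨a, ha, hR⟩ := rnd_spec ⟨_, hRT⟩ hth1 hth2
    have haF : a ∈ Fset p q := hR.1
    have hda : |u/2 - a| ≤ σ/2 := by
      have h := hR.2.1 _ hk'grid
      rwa [hdist] at h
    obtain ⟨M, hM⟩ := eq_int_mul_sigma haF
    have hudiff : u - 2*a = ((2*k+1-2*M : ℤ):ℝ) * σ := by rw [hM, hk]; push_cast; ring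
    have habsdiff : |u - 2*a| ≤ σ := by
      have heq : u - 2*a = 2*(u/2 - a) := by ring
      rw [heq, abs_mul, abs_two]
      linarith
    have hcoeff : |2*k+1-2*M| ≤ 1 := by
      by_contra hlt
      push_neg at hlt
      have h2' : (2:ℝ) ≤ |((2*k+1-2*M : ℤ):ℝ)| := by
        rw [← Int.cast_abs]; exact_mod_cast hlt
      have : 2 * σ ≤ |u - 2*a| := by
        rw [hudiff, abs_mul, abs_of_pos hσpos]
        nlinarith
      linarith
    have hMrange : M = k ∨ M = k + 1 := by
      have h := abs_le.mp hcoeff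
      omega
    have hdiffmem : u - 2*a ∈ Fset p q := by
      rw [hudiff]
      refine mem_grid ?_ hq
      have h := abs_le.mp hcoeff
      rcases abs_cases (2*k+1-2*M) with ⟨h2, _⟩ | ⟨h2, _⟩ <;> omega
    have h2amem : 2*a ∈ Fset p q := by
      have heq : 2*a = ((2*M : ℤ):ℝ) * σ := by rw [hM]; push_cast; ring
      rw [heq]
      refine mem_grid2 hE ?_
      rcases hMrange with h | h <;> rcases abs_cases (2*M) with ⟨h2, _⟩ | ⟨h2, _⟩ <;> omega
    -- |a| ≤ Omega/2
    have hub : |u| ≤ (((2:ℤ)^(p+1) - 1 : ℤ):ℝ) * σ := by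
      rw [hk, abs_mul, abs_of_pos hσpos]
      have : |((2*k+1 : ℤ):ℝ)| ≤ (((2:ℤ)^(p+1) - 1 : ℤ):ℝ) := by
        rw [← Int.cast_abs]; exact_mod_cast hkb
      nlinarith
    have hau : |a| ≤ |u|/2 + σ/2 := by
      have heq : a = u/2 - (u/2 - a) := by ring
      calc |a| = |u/2 - (u/2 - a)| := by rw [← heq]
      _ ≤ |u/2| + |u/2 - a| := abs_sub _ _
      _ ≤ |u|/2 + σ/2 := by
          rw [abs_div, abs_two]
          linarith
    have hsmall : |a| ≤ (2:ℝ) ^ (emin q) := by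
      have hc : (((2:ℤ)^(p+1) : ℤ):ℝ) * σ = 2 * (2:ℝ) ^ (emin q) := by
        push_cast
        rw [hσ, ← zpow_natCast (2:ℝ) (p+1)]
        rw [← zpow_add₀ (by norm_num : (2:ℝ) ≠ 0)]
        have hexp : ((p+1 : ℕ) : ℤ) + (emin q - (p:ℤ)) = emin q + 1 := by push_cast; ring
        rw [hexp, zpow_add_one₀ (by norm_num : (2:ℝ) ≠ 0)]
        ring
      have : |u| + σ ≤ 2 * (2:ℝ) ^ (emin q) := by
        rw [← hc]
        push_cast at hub ⊢
        linarith
      linarith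
    have hOm2 : (2:ℝ) ^ (emin q) ≤ Omega p q / 2 := by
      have h1 : (2:ℝ) ^ (emin q + 1) ≤ (2:ℝ) ^ (emax q) := two_zpow_mono (by rw [emin_eq]; omega)
      have h2 : (2:ℝ) ^ (emin q + 1) = 2 * (2:ℝ) ^ (emin q) :=
        by rw [zpow_add_one₀ (by norm_num : (2:ℝ) ≠ 0)]; ring
      have h3 := Omega_ge_pow (p := p) (q := q)
      linarith
    have hk1R : ((2*k+1 : ℤ):ℝ) = 2*(k:ℝ)+1 := by push_cast; ring
    refine ⟨a, ha, haF, by linarith, h2amem, hdiffmem, habsdiff, ?_, ?_⟩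
    · intro hu0
      have hZ : (0:ℤ) ≤ 2*k+1 := by
        by_contra hneg
        push_neg at hneg
        have hr : ((2*k+1:ℤ):ℝ) ≤ -1 := by exact_mod_cast (by omega : (2*k+1:ℤ) ≤ -1)
        have : u ≤ -σ := by rw [hk]; nlinarith
        linarith
      have hr1 : (1:ℝ) ≤ ((2*k+1:ℤ):ℝ) := by exact_mod_cast (by omega : (1:ℤ) ≤ 2*k+1)
      have hσu : σ ≤ u := by rw [hk]; nlinarith
      have h := abs_le.mp hda
      linarith [h.2]
    · intro hu0
      have hZ : (2*k+1:ℤ) ≤ 0 := by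
        by_contra hneg
        push_neg at hneg
        have hr : (1:ℝ) ≤ ((2*k+1:ℤ):ℝ) := by exact_mod_cast (by omega : (1:ℤ) ≤ 2*k+1)
        have : σ ≤ u := by rw [hk]; nlinarith
        linarith
      have hr1 : ((2*k+1:ℤ):ℝ) ≤ -1 := by exact_mod_cast (by omega : (2*k+1:ℤ) ≤ -1)
      have hσu : u ≤ -σ := by rw [hk]; nlinarith
      have h := abs_le.mp hda
      linarith [h.1]

lemma max_mem {t : ℝ} (hq : emin q ≤ emax q) (ht : t ∈ Fset p q) : max t 0 ∈ Fset p q := by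
  rcases le_total t 0 with h | h
  · rw [max_eq_right h]; exact zero_mem hq
  · rw [max_eq_left h]; exact ht

lemma frelu_fin {t : ℝ} (hq : emin q ≤ emax q) (ht : t ∈ Fset p q) :
    frelu p q (.fin t) = .fin (max t 0) := by
  show rnd p q (max t 0) = _
  exact rnd_mem (max_mem hq ht)

lemma fadd_fin (x y : ℝ) : fadd p q (.fin x) (.fin y) = rnd p q (x + y) := rfl

lemma fmul_fin (x y : ℝ) : fmul p q (.fin x) (.fin y) = rnd p q (x * y) := rfl

lemma fadd_zero_right {x : ℝ} (hx : x ∈ Fset p q) :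
    fadd p q (.fin x) (.fin 0) = .fin x := by
  rw [fadd_fin, add_zero]; exact rnd_mem hx

lemma foldl_exact : ∀ (l : List ℝ) (s : ℝ),
    (∀ m : ℕ, s + (l.take m).sum ∈ Fset p q) →
    List.foldl (fadd p q) (.fin s) (l.map EF.fin) = .fin (s + l.sum) := by
  intro l
  induction l with
  | nil => intro s h; simp
  | cons r rs ih =>
    intro s h
    have hsr : s + r ∈ Fset p q := by
      have := h 1
      simpa using this
    have hstep : fadd p q (.fin s) (.fin r) = .fin (s + r) := by
      rw [fadd_fin]; exact rnd_mem hsr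
    simp only [List.map_cons, List.foldl_cons, hstep]
    have h' : ∀ m : ℕ, (s + r) + (rs.take m).sum ∈ Fset p q := by
      intro m
      have := h (m + 1)
      simpa [List.take_succ_cons, add_assoc] using this
    rw [ih (s + r) h']
    congr 1
    simp [add_assoc]

lemma fsuml_exact (l : List ℝ) (h : ∀ m : ℕ, (l.take m).sum ∈ Fset p q) (m : ℕ) :
    fsuml p q ((l.take m).map EF.fin) = .fin ((l.take m).sum) := by
  cases l with
  | nil => simp [fsuml]
  | cons r rs =>
    cases m with
    | zero => simp [fsuml]
    | succ m' =>
      simp only [List.take_succ_cons, List.map_cons, List.sum_cons]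
      show List.foldl (fadd p q) (.fin r) ((rs.take m').map EF.fin) = _
      apply foldl_exact
      intro m''
      have := h (min m'' m' + 1)
      simpa [List.take_succ_cons, List.take_take] using this

lemma take_sum_eq {n : ℕ} (t : Fin n → ℝ) (m : ℕ) :
    (((List.finRange n).map t).take m).sum
      = ∑ j ∈ Finset.univ.filter (fun j : Fin n => (j:ℕ) < m), t j := by
  rw [← List.ofFn_eq_map]
  exact List.sum_take_ofFn t m

lemma pre_two {n : ℕ} (t : Fin n → ℝ) (k₁ k₂ : Fin n) (hlt : (k₁:ℕ) < (k₂:ℕ))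
    (hz : ∀ k, k ≠ k₁ → k ≠ k₂ → t k = 0) (m : ℕ) :
    (((List.finRange n).map t).take m).sum
      = (if (k₁:ℕ) < m then t k₁ else 0) + (if (k₂:ℕ) < m then t k₂ else 0) := by
  rw [take_sum_eq]
  have hne : k₁ ≠ k₂ := fun h => by rw [h] at hlt; omega
  rw [← Finset.sum_filter_add_sum_filter_not _ (fun j => j = k₁ ∨ j = k₂)]
  have hrest : ∑ j ∈ (Finset.univ.filter (fun j : Fin n => (j:ℕ) < m)).filter
      (fun j => ¬(j = k₁ ∨ j = k₂)), t j = 0 := by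
    apply Finset.sum_eq_zero
    intro j hj
    simp only [Finset.mem_filter] at hj
    push_neg at hj
    exact hz j hj.2.1 hj.2.2
  rw [hrest, add_zero]
  have hset : (Finset.univ.filter (fun j : Fin n => (j:ℕ) < m)).filter
      (fun j => j = k₁ ∨ j = k₂)
      = (if (k₁:ℕ) < m then {k₁} else ∅) ∪ (if (k₂:ℕ) < m then {k₂} else ∅) := by
    ext j
    by_cases h1 : (k₁:ℕ) < m <;> by_cases h2 : (k₂:ℕ) < m <;>
      simp only [Finset.mem_filter, Finset.mem_univ, true_and, if_pos, if_neg, h1, h2,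
        Finset.mem_union, Finset.mem_singleton, Finset.notMem_empty, if_true, if_false] <;>
      constructor <;> intro hh
    · tauto
    · rcases hh with rfl | rfl <;> tauto
    · rcases hh.2 with rfl | rfl
      · tauto
      · omega
    · rcases hh with rfl | h'
      · tauto
      · tauto
    · rcases hh.2 with rfl | rfl
      · omega
      · tauto
    · rcases hh with h' | rfl
      · tauto
      · tauto
    · rcases hh.2 with rfl | rfl <;> omega
    · tauto
  rw [hset]
  rcases Nat.lt_or_ge (k₁:ℕ) m with h1 | h1 <;> rcases Nat.lt_or_ge (k₂:ℕ) m with h2 | h2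
  · simp only [if_pos h1, if_pos h2]
    rw [Finset.sum_union (Finset.disjoint_singleton.mpr hne), Finset.sum_singleton,
      Finset.sum_singleton]
  · simp only [if_pos h1, if_neg (by omega : ¬ (k₂:ℕ) < m)]
    simp
  · simp only [if_neg (by omega : ¬ (k₁:ℕ) < m), if_pos h2]
    simp
  · simp only [if_neg (by omega : ¬ (k₁:ℕ) < m), if_neg (by omega : ¬ (k₂:ℕ) < m)]
    simp

lemma pre_one {n : ℕ} (t : Fin n → ℝ) (k₁ : Fin n)
    (hz : ∀ k, k ≠ k₁ → t k = 0) (m : ℕ) :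
    (((List.finRange n).map t).take m).sum = (if (k₁:ℕ) < m then t k₁ else 0) := by
  rw [take_sum_eq]
  rw [← Finset.sum_filter_add_sum_filter_not _ (fun j => j = k₁)]
  have hrest : ∑ j ∈ (Finset.univ.filter (fun j : Fin n => (j:ℕ) < m)).filter
      (fun j => ¬ j = k₁), t j = 0 := by
    apply Finset.sum_eq_zero
    intro j hj
    simp only [Finset.mem_filter] at hj
    exact hz j hj.2
  rw [hrest, add_zero]
  have hset : (Finset.univ.filter (fun j : Fin n => (j:ℕ) < m)).filter (fun j => j = k₁)
      = (if (k₁:ℕ) < m then {k₁} else ∅) := by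
    ext j
    by_cases h1 : (k₁:ℕ) < m <;>
      simp only [Finset.mem_filter, Finset.mem_univ, true_and, if_pos, if_neg, h1,
        Finset.mem_singleton, Finset.notMem_empty, if_true, if_false] <;>
      constructor <;> intro hh
    · exact hh.2
    · subst hh; exact ⟨h1, rfl⟩
    · rcases hh with ⟨h', rfl⟩; omega
    · tauto
  rw [hset]
  by_cases h1 : (k₁:ℕ) < m <;> simp [h1]

lemma finite_fin (r : ℝ) : (EF.fin r).Finite := by simp [EF.Finite]

lemma map_term_eq {na : ℕ} (W : Fin na → ℝ) (y : Fin na → EF) (t : Fin na → ℝ)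
    (hterm : ∀ k, fmul p q (.fin (W k)) (y k) = .fin (t k)) (m : ℕ) :
    ((List.finRange na).take m).map (fun k => fmul p q (.fin (W k)) (y k))
      = (((List.finRange na).map t).take m).map EF.fin := by
  rw [← List.map_take, List.map_map]
  exact List.map_congr_left (fun k _ => hterm k)

lemma take_all_map {na : ℕ} (t : Fin na → ℝ) :
    ((List.finRange na).map t).take na = (List.finRange na).map t :=
  List.take_of_length_le (by simp)

lemma aff_one (hq : emin q ≤ emax q) {na nb : ℕ} (W : Fin nb → Fin na → ℝ) (y : Fin na → EF)
    (i : Fin nb) (k₁ : Fin na) (v₁ : ℝ) (hv : v₁ ∈ Fset p q)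
    (hk : fmul p q (.fin (W i k₁)) (y k₁) = .fin v₁)
    (hz : ∀ k, k ≠ k₁ → fmul p q (.fin (W i k)) (y k) = .fin 0) :
    affApply p q W 0 y i = .fin v₁ ∧
      ∀ m : ℕ, (fsuml p q (((List.finRange na).take m).map
        (fun j => fmul p q (.fin (W i j)) (y j)))).Finite := by
  set t : Fin na → ℝ := fun k => if k = k₁ then v₁ else 0 with ht
  have hterm : ∀ k, fmul p q (.fin (W i k)) (y k) = .fin (t k) := by
    intro k
    by_cases h : k = k₁
    · subst h; simpa [ht] using hk
    · simp only [ht, if_neg h]; exact hz k h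
  have hzt : ∀ k, k ≠ k₁ → t k = 0 := fun k h => by simp [ht, if_neg h]
  have htk1 : t k₁ = v₁ := by simp [ht]
  have hpre : ∀ m : ℕ, (((List.finRange na).map t).take m).sum ∈ Fset p q := by
    intro m
    rw [pre_one t k₁ hzt m]
    by_cases h : (k₁:ℕ) < m
    · rw [if_pos h, htk1]; exact hv
    · rw [if_neg h]; exact zero_mem hq
  have hsum := fsuml_exact _ hpre
  have hval : ((List.finRange na).map t).sum = v₁ := by
    have h := pre_one t k₁ hzt na
    rw [take_all_map] at h
    rw [h, if_pos k₁.isLt, htk1]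
  constructor
  · show fadd p q (fsum p q _) (.fin 0) = _
    unfold fsum
    have hfr : (List.finRange na).take na = List.finRange na :=
      List.take_of_length_le (by simp)
    have h1 := map_term_eq (W i) y t hterm na
    rw [hfr, take_all_map] at h1
    rw [h1, ← take_all_map t, hsum na, take_all_map t, hval]
    exact fadd_zero_right hv
  · intro m
    rw [map_term_eq (W i) y t hterm m, hsum m]
    exact finite_fin _

lemma aff_two (hq : emin q ≤ emax q) {na nb : ℕ} (W : Fin nb → Fin na → ℝ) (y : Fin na → EF)
    (i : Fin nb) (k₁ k₂ : Fin na) (hlt : (k₁:ℕ) < (k₂:ℕ)) (v₁ v₂ : ℝ)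
    (hv : v₁ ∈ Fset p q) (hv12 : v₁ + v₂ ∈ Fset p q)
    (hk1 : fmul p q (.fin (W i k₁)) (y k₁) = .fin v₁)
    (hk2 : fmul p q (.fin (W i k₂)) (y k₂) = .fin v₂)
    (hz : ∀ k, k ≠ k₁ → k ≠ k₂ → fmul p q (.fin (W i k)) (y k) = .fin 0) :
    affApply p q W 0 y i = .fin (v₁ + v₂) ∧
      ∀ m : ℕ, (fsuml p q (((List.finRange na).take m).map
        (fun j => fmul p q (.fin (W i j)) (y j)))).Finite := by
  have hne : k₁ ≠ k₂ := fun h => by rw [h] at hlt; omega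
  set t : Fin na → ℝ := fun k => if k = k₁ then v₁ else if k = k₂ then v₂ else 0 with ht
  have hterm : ∀ k, fmul p q (.fin (W i k)) (y k) = .fin (t k) := by
    intro k
    by_cases h1 : k = k₁
    · subst h1; simpa [ht] using hk1
    · by_cases h2 : k = k₂
      · subst h2; simp only [ht, if_neg h1, if_pos rfl]; exact hk2
      · simp only [ht, if_neg h1, if_neg h2]; exact hz k h1 h2
  have hzt : ∀ k, k ≠ k₁ → k ≠ k₂ → t k = 0 := fun k h1 h2 => by
    simp [ht, if_neg h1, if_neg h2]
  have htk1 : t k₁ = v₁ := by simp [ht]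
  have htk2 : t k₂ = v₂ := by simp [ht, Ne.symm hne]
  have hpre : ∀ m : ℕ, (((List.finRange na).map t).take m).sum ∈ Fset p q := by
    intro m
    rw [pre_two t k₁ k₂ hlt hzt m]
    by_cases h1 : (k₁:ℕ) < m <;> by_cases h2 : (k₂:ℕ) < m
    · rw [if_pos h1, if_pos h2, htk1, htk2]; exact hv12
    · rw [if_pos h1, if_neg h2, htk1, add_zero]; exact hv
    · omega
    · rw [if_neg h1, if_neg h2, add_zero]; exact zero_mem hq
  have hsum := fsuml_exact _ hpre
  have hval : ((List.finRange na).map t).sum = v₁ + v₂ := by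
    have h := pre_two t k₁ k₂ hlt hzt na
    rw [take_all_map] at h
    rw [h, if_pos k₁.isLt, if_pos k₂.isLt, htk1, htk2]
  constructor
  · show fadd p q (fsum p q _) (.fin 0) = _
    unfold fsum
    have hfr : (List.finRange na).take na = List.finRange na :=
      List.take_of_length_le (by simp)
    have h1 := map_term_eq (W i) y t hterm na
    rw [hfr, take_all_map] at h1
    rw [h1, ← take_all_map t, hsum na, take_all_map t, hval]
    exact fadd_zero_right hv12
  · intro m
    rw [map_term_eq (W i) y t hterm m, hsum m]
    exact finite_fin _

lemma one_mem (hE : (p:ℤ) + 2 ≤ emax q) : (1:ℝ) ∈ Fset p q := by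
  have h := pow2_mem (p := p) (q := q) (e := 0) (by rw [emin_eq]; omega) (by omega)
  simpa using h

lemma two_mem (hE : (p:ℤ) + 2 ≤ emax q) : (2:ℝ) ∈ Fset p q := by
  have h := pow2_mem (p := p) (q := q) (e := 1) (by rw [emin_eq]; omega) (by omega)
  simpa using h

lemma half_mem (hE : (p:ℤ) + 2 ≤ emax q) : (2⁻¹:ℝ) ∈ Fset p q := by
  have h := pow2_mem (p := p) (q := q) (e := -1) (by rw [emin_eq]; omega) (by omega)
  rw [zpow_neg, zpow_one] at h
  exact h

lemma fmul_one {r : ℝ} (hr : r ∈ Fset p q) : fmul p q (.fin 1) (.fin r) = .fin r := by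
  rw [fmul_fin, one_mul]; exact rnd_mem hr

lemma fmul_negone {r : ℝ} (hr : r ∈ Fset p q) :
    fmul p q (.fin (-1)) (.fin r) = .fin (-r) := by
  rw [fmul_fin, show (-1:ℝ)*r = -r by ring]; exact rnd_mem (neg_mem hr)

lemma fmul_zero_left (hq : emin q ≤ emax q) (r : ℝ) :
    fmul p q (.fin 0) (.fin r) = .fin 0 := by
  rw [fmul_fin, zero_mul]; exact rnd_mem (zero_mem hq)

lemma fmul_two {r : ℝ} (h : 2*r ∈ Fset p q) : fmul p q (.fin 2) (.fin r) = .fin (2*r) := by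
  rw [fmul_fin]; exact rnd_mem h

lemma fmul_negtwo {r : ℝ} (h : 2*r ∈ Fset p q) :
    fmul p q (.fin (-2)) (.fin r) = .fin (-(2*r)) := by
  rw [fmul_fin, show (-2:ℝ)*r = -(2*r) by ring]; exact rnd_mem (neg_mem h)

lemma fmul_half {r aa : ℝ} (hrnd : rnd p q (r/2) = .fin aa) :
    fmul p q (.fin 2⁻¹) (.fin r) = .fin aa := by
  rw [fmul_fin, show (2⁻¹:ℝ)*r = r/2 by ring]; exact hrnd

lemma fmul_neghalf {r aa : ℝ} (hrnd : rnd p q ((-r)/2) = .fin aa) :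
    fmul p q (.fin (-2⁻¹)) (.fin r) = .fin aa := by
  rw [fmul_fin, show (-2⁻¹:ℝ)*r = (-r)/2 by ring]; exact hrnd

/-- First-layer weight matrix. -/
noncomputable def Wone (d0 : ℕ) : Fin (4*d0) → Fin d0 → ℝ := fun i j =>
  if (i:ℕ) = 4*(j:ℕ) then 1
  else if (i:ℕ) = 4*(j:ℕ)+1 then -1
  else if (i:ℕ) = 4*(j:ℕ)+2 then 2⁻¹
  else if (i:ℕ) = 4*(j:ℕ)+3 then -2⁻¹
  else 0

/-- Second-layer weight matrix. -/
def Wtwo (d0 : ℕ) : Fin (6*d0) → Fin (4*d0) → ℝ := fun i k =>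
  if (i:ℕ) % 6 = 0 then (if (k:ℕ) = 4*((i:ℕ)/6)+2 then 1 else 0)
  else if (i:ℕ) % 6 = 1 then (if (k:ℕ) = 4*((i:ℕ)/6)+3 then 1 else 0)
  else if (i:ℕ) % 6 = 2 then
    (if (k:ℕ) = 4*((i:ℕ)/6) then 1 else if (k:ℕ) = 4*((i:ℕ)/6)+2 then -2 else 0)
  else if (i:ℕ) % 6 = 3 then
    (if (k:ℕ) = 4*((i:ℕ)/6) then -1 else if (k:ℕ) = 4*((i:ℕ)/6)+2 then 2 else 0)
  else if (i:ℕ) % 6 = 4 then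
    (if (k:ℕ) = 4*((i:ℕ)/6)+1 then 1 else if (k:ℕ) = 4*((i:ℕ)/6)+3 then -2 else 0)
  else
    (if (k:ℕ) = 4*((i:ℕ)/6)+1 then -1 else if (k:ℕ) = 4*((i:ℕ)/6)+3 then 2 else 0)

lemma Wone_mem (hE : (p:ℤ) + 2 ≤ emax q) {d0 : ℕ} (i : Fin (4*d0)) (j : Fin d0) :
    Wone d0 i j ∈ Fset p q := by
  have hq : emin q ≤ emax q := by rw [emin_eq]; omega
  unfold Wone
  split_ifs
  · exact one_mem hE
  · exact neg_mem (one_mem hE)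
  · exact half_mem hE
  · exact neg_mem (half_mem hE)
  · exact zero_mem hq

lemma Wtwo_mem (hE : (p:ℤ) + 2 ≤ emax q) {d0 : ℕ} (i : Fin (6*d0)) (k : Fin (4*d0)) :
    Wtwo d0 i k ∈ Fset p q := by
  have hq : emin q ≤ emax q := by rw [emin_eq]; omega
  unfold Wtwo
  split_ifs
  all_goals first
  | exact one_mem hE
  | exact neg_mem (one_mem hE)
  | exact two_mem hE
  | exact neg_mem (two_mem hE)
  | exact zero_mem hq

lemma isF_elim {z : EF} (hz : z.IsF p q) : ∃ r, z = .fin r ∧ r ∈ Fset p q := by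
  cases z with
  | fin r => exact ⟨r, rfl, hz⟩
  | pinf => exact hz.elim
  | ninf => exact hz.elim
  | nan => exact hz.elim

lemma Wone_diag0 {d0 : ℕ} (i : Fin (4*d0)) (j : Fin d0) (hi : (i:ℕ) = 4*(j:ℕ)) :
    Wone d0 i j = 1 := by
  unfold Wone; rw [if_pos hi]

lemma Wone_diag1 {d0 : ℕ} (i : Fin (4*d0)) (j : Fin d0) (hi : (i:ℕ) = 4*(j:ℕ)+1) :
    Wone d0 i j = -1 := by
  unfold Wone; rw [if_neg (by omega), if_pos hi]

lemma Wone_diag2 {d0 : ℕ} (i : Fin (4*d0)) (j : Fin d0) (hi : (i:ℕ) = 4*(j:ℕ)+2) :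
    Wone d0 i j = 2⁻¹ := by
  unfold Wone; rw [if_neg (by omega), if_neg (by omega), if_pos hi]

lemma Wone_diag3 {d0 : ℕ} (i : Fin (4*d0)) (j : Fin d0) (hi : (i:ℕ) = 4*(j:ℕ)+3) :
    Wone d0 i j = -2⁻¹ := by
  unfold Wone; rw [if_neg (by omega), if_neg (by omega), if_neg (by omega), if_pos hi]

lemma Wone_off {d0 : ℕ} (i : Fin (4*d0)) (j : Fin d0) (t : ℕ) (ht : t < 4)
    (hi : (i:ℕ) = 4*(j:ℕ)+t) (k : Fin d0) (hk : k ≠ j) : Wone d0 i k = 0 := by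
  have hkj : (k:ℕ) ≠ (j:ℕ) := fun h => hk (Fin.ext h)
  unfold Wone
  rw [if_neg (by omega), if_neg (by omega), if_neg (by omega), if_neg (by omega)]

lemma Wtwo_eval {d0 : ℕ} (i : Fin (6*d0)) (j : Fin d0) (t : ℕ) (ht : t < 6)
    (hi : (i:ℕ) = 6*(j:ℕ)+t) (k : Fin (4*d0)) :
    Wtwo d0 i k =
      (if t = 0 then (if (k:ℕ) = 4*(j:ℕ)+2 then 1 else 0)
       else if t = 1 then (if (k:ℕ) = 4*(j:ℕ)+3 then 1 else 0)
       else if t = 2 then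
         (if (k:ℕ) = 4*(j:ℕ) then 1 else if (k:ℕ) = 4*(j:ℕ)+2 then -2 else 0)
       else if t = 3 then
         (if (k:ℕ) = 4*(j:ℕ) then -1 else if (k:ℕ) = 4*(j:ℕ)+2 then 2 else 0)
       else if t = 4 then
         (if (k:ℕ) = 4*(j:ℕ)+1 then 1 else if (k:ℕ) = 4*(j:ℕ)+3 then -2 else 0)
       else (if (k:ℕ) = 4*(j:ℕ)+1 then -1 else if (k:ℕ) = 4*(j:ℕ)+3 then 2 else 0)) := by
  have h1 : (i:ℕ) % 6 = t := by omega
  have h2 : (i:ℕ) / 6 = (j:ℕ) := by omega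
  unfold Wtwo
  rw [h1, h2]

set_option maxHeartbeats 2000000 in
lemma eval_main (hp : 2 ≤ p) (hE : (p:ℤ) + 2 ≤ emax q) {d0 : ℕ} (x : Fin d0 → EF)
    (hx : VecFin p q x) :
    ∃ (xr : Fin d0 → ℝ) (O : Fin d0 → ℕ → ℝ),
      (∀ j, x j = .fin (xr j)) ∧
      (∀ (j : Fin d0) (t : ℕ) (ht : t < 6),
        frelu p q (affApply p q (Wtwo d0) 0
          (fun k => frelu p q (affApply p q (Wone d0) 0 x k))
          ⟨6*(j:ℕ)+t, by have := j.isLt; omega⟩) = .fin (O j t)) ∧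
      (∀ (j : Fin d0) (t : ℕ), t < 6 →
        O j t ∈ Fset p q ∧ 0 ≤ O j t ∧ O j t ≤ (2:ℝ) ^ (emax q)) ∧
      (∀ j, xr j = (2*(O j 0) + (O j 2 - O j 3)) - (2*(O j 1) + (O j 4 - O j 5))) ∧
      AffIntermFin p q (Wone d0) 0 x ∧
      AffIntermFin p q (Wtwo d0) 0
        (fun k => frelu p q (affApply p q (Wone d0) 0 x k)) := by
  have hq : emin q ≤ emax q := by rw [emin_eq]; omega
  choose xr hxr hxF using fun j => isF_elim (hx j)
  choose a ha haF haOm h2a hdifa habsa hsga hsga' using fun j => rnd_half hp hE (hxF j)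
  choose b hb hbF hbOm h2b hdifb habsb hsgb hsgb' using
    fun j => rnd_half hp hE (neg_mem (hxF j))
  have huF : ∀ j, max (xr j) 0 ∈ Fset p q := fun j => max_mem hq (hxF j)
  have hvF : ∀ j, max (-(xr j)) 0 ∈ Fset p q := fun j => max_mem hq (neg_mem (hxF j))
  have hAF : ∀ j, max (a j) 0 ∈ Fset p q := fun j => max_mem hq (haF j)
  have hBF : ∀ j, max (b j) 0 ∈ Fset p q := fun j => max_mem hq (hbF j)
  have h2A : ∀ j, 2*(max (a j) 0) ∈ Fset p q := by
    intro j
    rcases le_total (a j) 0 with h | h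
    · rw [max_eq_right h, mul_zero]; exact zero_mem hq
    · rw [max_eq_left h]; exact h2a j
  have h2B : ∀ j, 2*(max (b j) 0) ∈ Fset p q := by
    intro j
    rcases le_total (b j) 0 with h | h
    · rw [max_eq_right h, mul_zero]; exact zero_mem hq
    · rw [max_eq_left h]; exact h2b j
  have hUA : ∀ j, (max (xr j) 0 + -(2*max (a j) 0) ∈ Fset p q) ∧
      |max (xr j) 0 + -(2*max (a j) 0)| ≤ (2:ℝ)^(emin q - (p:ℤ)) := by
    intro j
    rcases le_total (xr j) 0 with h | h
    · have ha0 : a j ≤ 0 := hsga' j h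
      have heq : max (xr j) 0 + -(2*max (a j) 0) = 0 := by
        rw [max_eq_right h, max_eq_right ha0]; ring
      rw [heq]
      exact ⟨zero_mem hq, by rw [abs_zero]; exact le_of_lt (sigma_pos (p := p) (q := q))⟩
    · have ha0 : 0 ≤ a j := hsga j h
      have heq : max (xr j) 0 + -(2*max (a j) 0) = xr j - 2*(a j) := by
        rw [max_eq_left h, max_eq_left ha0]; ring
      rw [heq]
      exact ⟨hdifa j, habsa j⟩
  have hVB : ∀ j, (max (-(xr j)) 0 + -(2*max (b j) 0) ∈ Fset p q) ∧
      |max (-(xr j)) 0 + -(2*max (b j) 0)| ≤ (2:ℝ)^(emin q - (p:ℤ)) := by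
    intro j
    rcases le_total (xr j) 0 with h | h
    · have hb0 : 0 ≤ b j := hsgb j (by linarith)
      have heq : max (-(xr j)) 0 + -(2*max (b j) 0) = -(xr j) - 2*(b j) := by
        rw [max_eq_left (by linarith), max_eq_left hb0]; ring
      rw [heq]
      exact ⟨hdifb j, habsb j⟩
    · have hb0 : b j ≤ 0 := hsgb' j (by linarith)
      have heq : max (-(xr j)) 0 + -(2*max (b j) 0) = 0 := by
        rw [max_eq_right (by linarith), max_eq_right hb0]; ring
      rw [heq]
      exact ⟨zero_mem hq, by rw [abs_zero]; exact le_of_lt (sigma_pos (p := p) (q := q))⟩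
  have hσmax : (2:ℝ)^(emin q - (p:ℤ)) ≤ (2:ℝ)^(emax q) :=
    two_zpow_mono (by rw [emin_eq]; omega)
  have hΩhalf := Omega_half_le (p := p) hE
  have hAle : ∀ j, max (a j) 0 ≤ (2:ℝ)^(emax q) := by
    intro j
    apply max_le _ (le_of_lt two_zpow_pos)
    calc a j ≤ |a j| := le_abs_self _
    _ ≤ Omega p q / 2 := haOm j
    _ ≤ (2:ℝ)^(emax q) := hΩhalf
  have hBle : ∀ j, max (b j) 0 ≤ (2:ℝ)^(emax q) := by
    intro j
    apply max_le _ (le_of_lt two_zpow_pos)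
    calc b j ≤ |b j| := le_abs_self _
    _ ≤ Omega p q / 2 := hbOm j
    _ ≤ (2:ℝ)^(emax q) := hΩhalf
  -- Layer 1 rows
  have hY0 : ∀ (i : Fin (4*d0)) (j : Fin d0), (i:ℕ) = 4*(j:ℕ) →
      affApply p q (Wone d0) 0 x i = .fin (xr j) ∧
      ∀ m : ℕ, (fsuml p q (((List.finRange d0).take m).map
        (fun k => fmul p q (.fin (Wone d0 i k)) (x k)))).Finite := by
    intro i j hi
    apply aff_one hq (Wone d0) x i j (xr j) (hxF j)
    · rw [Wone_diag0 i j hi, hxr j]; exact fmul_one (hxF j)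
    · intro k hk
      rw [Wone_off i j 0 (by omega) (by omega) k hk, hxr k]
      exact fmul_zero_left hq _
  have hY1 : ∀ (i : Fin (4*d0)) (j : Fin d0), (i:ℕ) = 4*(j:ℕ)+1 →
      affApply p q (Wone d0) 0 x i = .fin (-(xr j)) ∧
      ∀ m : ℕ, (fsuml p q (((List.finRange d0).take m).map
        (fun k => fmul p q (.fin (Wone d0 i k)) (x k)))).Finite := by
    intro i j hi
    apply aff_one hq (Wone d0) x i j (-(xr j)) (neg_mem (hxF j))
    · rw [Wone_diag1 i j hi, hxr j]; exact fmul_negone (hxF j)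
    · intro k hk
      rw [Wone_off i j 1 (by omega) (by omega) k hk, hxr k]
      exact fmul_zero_left hq _
  have hY2 : ∀ (i : Fin (4*d0)) (j : Fin d0), (i:ℕ) = 4*(j:ℕ)+2 →
      affApply p q (Wone d0) 0 x i = .fin (a j) ∧
      ∀ m : ℕ, (fsuml p q (((List.finRange d0).take m).map
        (fun k => fmul p q (.fin (Wone d0 i k)) (x k)))).Finite := by
    intro i j hi
    apply aff_one hq (Wone d0) x i j (a j) (haF j)
    · rw [Wone_diag2 i j hi, hxr j]; exact fmul_half (ha j)
    · intro k hk
      rw [Wone_off i j 2 (by omega) (by omega) k hk, hxr k]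
      exact fmul_zero_left hq _
  have hY3 : ∀ (i : Fin (4*d0)) (j : Fin d0), (i:ℕ) = 4*(j:ℕ)+3 →
      affApply p q (Wone d0) 0 x i = .fin (b j) ∧
      ∀ m : ℕ, (fsuml p q (((List.finRange d0).take m).map
        (fun k => fmul p q (.fin (Wone d0 i k)) (x k)))).Finite := by
    intro i j hi
    apply aff_one hq (Wone d0) x i j (b j) (hbF j)
    · rw [Wone_diag3 i j hi, hxr j]; exact fmul_neghalf (hb j)
    · intro k hk
      rw [Wone_off i j 3 (by omega) (by omega) k hk, hxr k]
      exact fmul_zero_left hq _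
  have hYv0 : ∀ (i : Fin (4*d0)) (j : Fin d0), (i:ℕ) = 4*(j:ℕ) →
      frelu p q (affApply p q (Wone d0) 0 x i) = .fin (max (xr j) 0) := by
    intro i j hi; rw [(hY0 i j hi).1]; exact frelu_fin hq (hxF j)
  have hYv1 : ∀ (i : Fin (4*d0)) (j : Fin d0), (i:ℕ) = 4*(j:ℕ)+1 →
      frelu p q (affApply p q (Wone d0) 0 x i) = .fin (max (-(xr j)) 0) := by
    intro i j hi; rw [(hY1 i j hi).1]; exact frelu_fin hq (neg_mem (hxF j))
  have hYv2 : ∀ (i : Fin (4*d0)) (j : Fin d0), (i:ℕ) = 4*(j:ℕ)+2 →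
      frelu p q (affApply p q (Wone d0) 0 x i) = .fin (max (a j) 0) := by
    intro i j hi; rw [(hY2 i j hi).1]; exact frelu_fin hq (haF j)
  have hYv3 : ∀ (i : Fin (4*d0)) (j : Fin d0), (i:ℕ) = 4*(j:ℕ)+3 →
      frelu p q (affApply p q (Wone d0) 0 x i) = .fin (max (b j) 0) := by
    intro i j hi; rw [(hY3 i j hi).1]; exact frelu_fin hq (hbF j)
  have hYfin : ∀ k : Fin (4*d0), ∃ r,
      frelu p q (affApply p q (Wone d0) 0 x k) = .fin r ∧ r ∈ Fset p q := by
    intro k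
    have hkd : (k:ℕ) < 4*d0 := k.isLt
    have hjlt : (k:ℕ)/4 < d0 := by omega
    set j : Fin d0 := ⟨(k:ℕ)/4, hjlt⟩ with hjdef
    have hjv : (j:ℕ) = (k:ℕ)/4 := rfl
    have hcases : (k:ℕ) = 4*(j:ℕ) ∨ (k:ℕ) = 4*(j:ℕ)+1 ∨ (k:ℕ) = 4*(j:ℕ)+2 ∨
        (k:ℕ) = 4*(j:ℕ)+3 := by rw [hjv]; omega
    rcases hcases with h | h | h | h
    · exact ⟨_, hYv0 k j h, huF j⟩
    · exact ⟨_, hYv1 k j h, hvF j⟩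
    · exact ⟨_, hYv2 k j h, hAF j⟩
    · exact ⟨_, hYv3 k j h, hBF j⟩
  have hzmul : ∀ (w : ℝ) (k : Fin (4*d0)), w = 0 →
      fmul p q (.fin w) (frelu p q (affApply p q (Wone d0) 0 x k)) = .fin 0 := by
    intro w k hw
    obtain ⟨r, hr, _⟩ := hYfin k
    rw [hw, hr]
    exact fmul_zero_left hq r
  -- Layer 2 rows
  have hR0 : ∀ (i : Fin (6*d0)) (j : Fin d0), (i:ℕ) = 6*(j:ℕ) →
      affApply p q (Wtwo d0) 0 (fun k => frelu p q (affApply p q (Wone d0) 0 x k)) i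
        = .fin (max (a j) 0) ∧
      ∀ m : ℕ, (fsuml p q (((List.finRange (4*d0)).take m).map
        (fun k => fmul p q (.fin (Wtwo d0 i k))
          (frelu p q (affApply p q (Wone d0) 0 x k))))).Finite := by
    intro i j hi
    have hjlt := j.isLt
    apply aff_one hq (Wtwo d0) _ i ⟨4*(j:ℕ)+2, by omega⟩ _ (hAF j)
    · have hw : Wtwo d0 i ⟨4*(j:ℕ)+2, by omega⟩ = 1 := by
        rw [Wtwo_eval i j 0 (by omega) (by omega)]
        norm_num
      rw [hw, hYv2 ⟨4*(j:ℕ)+2, by omega⟩ j rfl]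
      exact fmul_one (hAF j)
    · intro k hk
      apply hzmul
      rw [Wtwo_eval i j 0 (by omega) (by omega) k]
      have hkv : (k:ℕ) ≠ 4*(j:ℕ)+2 := fun h => hk (Fin.ext h)
      norm_num [hkv]
  have hR1 : ∀ (i : Fin (6*d0)) (j : Fin d0), (i:ℕ) = 6*(j:ℕ)+1 →
      affApply p q (Wtwo d0) 0 (fun k => frelu p q (affApply p q (Wone d0) 0 x k)) i
        = .fin (max (b j) 0) ∧
      ∀ m : ℕ, (fsuml p q (((List.finRange (4*d0)).take m).map
        (fun k => fmul p q (.fin (Wtwo d0 i k))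
          (frelu p q (affApply p q (Wone d0) 0 x k))))).Finite := by
    intro i j hi
    have hjlt := j.isLt
    apply aff_one hq (Wtwo d0) _ i ⟨4*(j:ℕ)+3, by omega⟩ _ (hBF j)
    · have hw : Wtwo d0 i ⟨4*(j:ℕ)+3, by omega⟩ = 1 := by
        rw [Wtwo_eval i j 1 (by omega) (by omega)]
        norm_num
      rw [hw, hYv3 ⟨4*(j:ℕ)+3, by omega⟩ j rfl]
      exact fmul_one (hBF j)
    · intro k hk
      apply hzmul
      rw [Wtwo_eval i j 1 (by omega) (by omega) k]
      have hkv : (k:ℕ) ≠ 4*(j:ℕ)+3 := fun h => hk (Fin.ext h)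
      norm_num [hkv]
  have hR2 : ∀ (i : Fin (6*d0)) (j : Fin d0), (i:ℕ) = 6*(j:ℕ)+2 →
      affApply p q (Wtwo d0) 0 (fun k => frelu p q (affApply p q (Wone d0) 0 x k)) i
        = .fin (max (xr j) 0 + -(2*max (a j) 0)) ∧
      ∀ m : ℕ, (fsuml p q (((List.finRange (4*d0)).take m).map
        (fun k => fmul p q (.fin (Wtwo d0 i k))
          (frelu p q (affApply p q (Wone d0) 0 x k))))).Finite := by
    intro i j hi
    have hjlt := j.isLt
    apply aff_two hq (Wtwo d0) _ i ⟨4*(j:ℕ), by omega⟩ ⟨4*(j:ℕ)+2, by omega⟩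
      (by simp) _ _ (huF j) (hUA j).1
    · have hw : Wtwo d0 i ⟨4*(j:ℕ), by omega⟩ = 1 := by
        rw [Wtwo_eval i j 2 (by omega) (by omega)]
        norm_num
      rw [hw, hYv0 ⟨4*(j:ℕ), by omega⟩ j rfl]
      exact fmul_one (huF j)
    · have hw : Wtwo d0 i ⟨4*(j:ℕ)+2, by omega⟩ = -2 := by
        rw [Wtwo_eval i j 2 (by omega) (by omega)]
        norm_num
      rw [hw, hYv2 ⟨4*(j:ℕ)+2, by omega⟩ j rfl]
      exact fmul_negtwo (h2A j)
    · intro k hk1 hk2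
      apply hzmul
      rw [Wtwo_eval i j 2 (by omega) (by omega) k]
      have hkv1 : (k:ℕ) ≠ 4*(j:ℕ) := fun h => hk1 (Fin.ext h)
      have hkv2 : (k:ℕ) ≠ 4*(j:ℕ)+2 := fun h => hk2 (Fin.ext h)
      norm_num [hkv1, hkv2]
  have hR3 : ∀ (i : Fin (6*d0)) (j : Fin d0), (i:ℕ) = 6*(j:ℕ)+3 →
      affApply p q (Wtwo d0) 0 (fun k => frelu p q (affApply p q (Wone d0) 0 x k)) i
        = .fin (-(max (xr j) 0) + 2*max (a j) 0) ∧
      ∀ m : ℕ, (fsuml p q (((List.finRange (4*d0)).take m).map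
        (fun k => fmul p q (.fin (Wtwo d0 i k))
          (frelu p q (affApply p q (Wone d0) 0 x k))))).Finite := by
    intro i j hi
    have hjlt := j.isLt
    have hmem : -(max (xr j) 0) + 2*max (a j) 0 ∈ Fset p q := by
      have heq : -(max (xr j) 0) + 2*max (a j) 0
          = -((max (xr j) 0) + -(2*max (a j) 0)) := by ring
      rw [heq]; exact neg_mem (hUA j).1
    apply aff_two hq (Wtwo d0) _ i ⟨4*(j:ℕ), by omega⟩ ⟨4*(j:ℕ)+2, by omega⟩
      (by simp) _ _ (neg_mem (huF j)) hmem
    · have hw : Wtwo d0 i ⟨4*(j:ℕ), by omega⟩ = -1 := by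
        rw [Wtwo_eval i j 3 (by omega) (by omega)]
        norm_num
      rw [hw, hYv0 ⟨4*(j:ℕ), by omega⟩ j rfl]
      exact fmul_negone (huF j)
    · have hw : Wtwo d0 i ⟨4*(j:ℕ)+2, by omega⟩ = 2 := by
        rw [Wtwo_eval i j 3 (by omega) (by omega)]
        norm_num
      rw [hw, hYv2 ⟨4*(j:ℕ)+2, by omega⟩ j rfl]
      exact fmul_two (h2A j)
    · intro k hk1 hk2
      apply hzmul
      rw [Wtwo_eval i j 3 (by omega) (by omega) k]
      have hkv1 : (k:ℕ) ≠ 4*(j:ℕ) := fun h => hk1 (Fin.ext h)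
      have hkv2 : (k:ℕ) ≠ 4*(j:ℕ)+2 := fun h => hk2 (Fin.ext h)
      norm_num [hkv1, hkv2]
  have hR4 : ∀ (i : Fin (6*d0)) (j : Fin d0), (i:ℕ) = 6*(j:ℕ)+4 →
      affApply p q (Wtwo d0) 0 (fun k => frelu p q (affApply p q (Wone d0) 0 x k)) i
        = .fin (max (-(xr j)) 0 + -(2*max (b j) 0)) ∧
      ∀ m : ℕ, (fsuml p q (((List.finRange (4*d0)).take m).map
        (fun k => fmul p q (.fin (Wtwo d0 i k))
          (frelu p q (affApply p q (Wone d0) 0 x k))))).Finite := by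
    intro i j hi
    have hjlt := j.isLt
    apply aff_two hq (Wtwo d0) _ i ⟨4*(j:ℕ)+1, by omega⟩ ⟨4*(j:ℕ)+3, by omega⟩
      (by simp) _ _ (hvF j) (hVB j).1
    · have hw : Wtwo d0 i ⟨4*(j:ℕ)+1, by omega⟩ = 1 := by
        rw [Wtwo_eval i j 4 (by omega) (by omega)]
        norm_num
      rw [hw, hYv1 ⟨4*(j:ℕ)+1, by omega⟩ j rfl]
      exact fmul_one (hvF j)
    · have hw : Wtwo d0 i ⟨4*(j:ℕ)+3, by omega⟩ = -2 := by
        rw [Wtwo_eval i j 4 (by omega) (by omega)]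
        norm_num
      rw [hw, hYv3 ⟨4*(j:ℕ)+3, by omega⟩ j rfl]
      exact fmul_negtwo (h2B j)
    · intro k hk1 hk2
      apply hzmul
      rw [Wtwo_eval i j 4 (by omega) (by omega) k]
      have hkv1 : (k:ℕ) ≠ 4*(j:ℕ)+1 := fun h => hk1 (Fin.ext h)
      have hkv2 : (k:ℕ) ≠ 4*(j:ℕ)+3 := fun h => hk2 (Fin.ext h)
      norm_num [hkv1, hkv2]
  have hR5 : ∀ (i : Fin (6*d0)) (j : Fin d0), (i:ℕ) = 6*(j:ℕ)+5 →
      affApply p q (Wtwo d0) 0 (fun k => frelu p q (affApply p q (Wone d0) 0 x k)) i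
        = .fin (-(max (-(xr j)) 0) + 2*max (b j) 0) ∧
      ∀ m : ℕ, (fsuml p q (((List.finRange (4*d0)).take m).map
        (fun k => fmul p q (.fin (Wtwo d0 i k))
          (frelu p q (affApply p q (Wone d0) 0 x k))))).Finite := by
    intro i j hi
    have hjlt := j.isLt
    have hmem : -(max (-(xr j)) 0) + 2*max (b j) 0 ∈ Fset p q := by
      have heq : -(max (-(xr j)) 0) + 2*max (b j) 0
          = -((max (-(xr j)) 0) + -(2*max (b j) 0)) := by ring
      rw [heq]; exact neg_mem (hVB j).1
    apply aff_two hq (Wtwo d0) _ i ⟨4*(j:ℕ)+1, by omega⟩ ⟨4*(j:ℕ)+3, by omega⟩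
      (by simp) _ _ (neg_mem (hvF j)) hmem
    · have hw : Wtwo d0 i ⟨4*(j:ℕ)+1, by omega⟩ = -1 := by
        rw [Wtwo_eval i j 5 (by omega) (by omega)]
        norm_num
      rw [hw, hYv1 ⟨4*(j:ℕ)+1, by omega⟩ j rfl]
      exact fmul_negone (hvF j)
    · have hw : Wtwo d0 i ⟨4*(j:ℕ)+3, by omega⟩ = 2 := by
        rw [Wtwo_eval i j 5 (by omega) (by omega)]
        norm_num
      rw [hw, hYv3 ⟨4*(j:ℕ)+3, by omega⟩ j rfl]
      exact fmul_two (h2B j)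
    · intro k hk1 hk2
      apply hzmul
      rw [Wtwo_eval i j 5 (by omega) (by omega) k]
      have hkv1 : (k:ℕ) ≠ 4*(j:ℕ)+1 := fun h => hk1 (Fin.ext h)
      have hkv2 : (k:ℕ) ≠ 4*(j:ℕ)+3 := fun h => hk2 (Fin.ext h)
      norm_num [hkv1, hkv2]
  -- assemble
  refine ⟨xr, fun j t =>
    if t = 0 then max (a j) 0
    else if t = 1 then max (b j) 0
    else if t = 2 then max (max (xr j) 0 + -(2*max (a j) 0)) 0
    else if t = 3 then max (-(max (xr j) 0) + 2*max (a j) 0) 0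
    else if t = 4 then max (max (-(xr j)) 0 + -(2*max (b j) 0)) 0
    else max (-(max (-(xr j)) 0) + 2*max (b j) 0) 0,
    hxr, ?_, ?_, ?_, ?_, ?_⟩
  · intro j t ht
    have hcase : t = 0 ∨ t = 1 ∨ t = 2 ∨ t = 3 ∨ t = 4 ∨ t = 5 := by omega
    have hjlt := j.isLt
    rcases hcase with rfl | rfl | rfl | rfl | rfl | rfl
    · rw [(hR0 ⟨6*(j:ℕ)+0, by omega⟩ j rfl).1, frelu_fin hq (hAF j)]
      norm_num [max_eq_left (le_max_right (a j) 0)]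
    · rw [(hR1 ⟨6*(j:ℕ)+1, by omega⟩ j rfl).1, frelu_fin hq (hBF j)]
      norm_num [max_eq_left (le_max_right (b j) 0)]
    · rw [(hR2 ⟨6*(j:ℕ)+2, by omega⟩ j rfl).1, frelu_fin hq (hUA j).1]
      norm_num
    · rw [(hR3 ⟨6*(j:ℕ)+3, by omega⟩ j rfl).1, frelu_fin hq (by
        have heq : -(max (xr j) 0) + 2*max (a j) 0
            = -((max (xr j) 0) + -(2*max (a j) 0)) := by ring
        rw [heq]; exact neg_mem (hUA j).1)]
      norm_num
    · rw [(hR4 ⟨6*(j:ℕ)+4, by omega⟩ j rfl).1, frelu_fin hq (hVB j).1]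
      norm_num
    · rw [(hR5 ⟨6*(j:ℕ)+5, by omega⟩ j rfl).1, frelu_fin hq (by
        have heq : -(max (-(xr j)) 0) + 2*max (b j) 0
            = -((max (-(xr j)) 0) + -(2*max (b j) 0)) := by ring
        rw [heq]; exact neg_mem (hVB j).1)]
      norm_num
  · intro j t ht
    have hcase : t = 0 ∨ t = 1 ∨ t = 2 ∨ t = 3 ∨ t = 4 ∨ t = 5 := by omega
    have hz2 : (0:ℝ) ≤ (2:ℝ)^(emax q) := le_of_lt two_zpow_pos
    rcases hcase with rfl | rfl | rfl | rfl | rfl | rfl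
    · exact ⟨hAF j, le_max_right _ _, hAle j⟩
    · exact ⟨hBF j, le_max_right _ _, hBle j⟩
    · refine ⟨max_mem hq (hUA j).1, le_max_right _ _, max_le ?_ hz2⟩
      calc max (xr j) 0 + -(2*max (a j) 0) ≤ |max (xr j) 0 + -(2*max (a j) 0)| :=
        le_abs_self _
      _ ≤ (2:ℝ)^(emin q - (p:ℤ)) := (hUA j).2
      _ ≤ (2:ℝ)^(emax q) := hσmax
    · have hmem : -(max (xr j) 0) + 2*max (a j) 0 ∈ Fset p q := by
        have heq : -(max (xr j) 0) + 2*max (a j) 0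
            = -((max (xr j) 0) + -(2*max (a j) 0)) := by ring
        rw [heq]; exact neg_mem (hUA j).1
      refine ⟨max_mem hq hmem, le_max_right _ _, max_le ?_ hz2⟩
      have habs : |(-(max (xr j) 0) + 2*max (a j) 0)| ≤ (2:ℝ)^(emin q - (p:ℤ)) := by
        have heq : -(max (xr j) 0) + 2*max (a j) 0
            = -((max (xr j) 0) + -(2*max (a j) 0)) := by ring
        rw [heq, abs_neg]; exact (hUA j).2
      calc -(max (xr j) 0) + 2*max (a j) 0 ≤ |(-(max (xr j) 0) + 2*max (a j) 0)| :=
        le_abs_self _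
      _ ≤ (2:ℝ)^(emin q - (p:ℤ)) := habs
      _ ≤ (2:ℝ)^(emax q) := hσmax
    · refine ⟨max_mem hq (hVB j).1, le_max_right _ _, max_le ?_ hz2⟩
      calc max (-(xr j)) 0 + -(2*max (b j) 0) ≤ |max (-(xr j)) 0 + -(2*max (b j) 0)| :=
        le_abs_self _
      _ ≤ (2:ℝ)^(emin q - (p:ℤ)) := (hVB j).2
      _ ≤ (2:ℝ)^(emax q) := hσmax
    · have hmem : -(max (-(xr j)) 0) + 2*max (b j) 0 ∈ Fset p q := by
        have heq : -(max (-(xr j)) 0) + 2*max (b j) 0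
            = -((max (-(xr j)) 0) + -(2*max (b j) 0)) := by ring
        rw [heq]; exact neg_mem (hVB j).1
      refine ⟨max_mem hq hmem, le_max_right _ _, max_le ?_ hz2⟩
      have habs : |(-(max (-(xr j)) 0) + 2*max (b j) 0)| ≤ (2:ℝ)^(emin q - (p:ℤ)) := by
        have heq : -(max (-(xr j)) 0) + 2*max (b j) 0
            = -((max (-(xr j)) 0) + -(2*max (b j) 0)) := by ring
        rw [heq, abs_neg]; exact (hVB j).2
      calc -(max (-(xr j)) 0) + 2*max (b j) 0 ≤ |(-(max (-(xr j)) 0) + 2*max (b j) 0)| :=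
        le_abs_self _
      _ ≤ (2:ℝ)^(emin q - (p:ℤ)) := habs
      _ ≤ (2:ℝ)^(emax q) := hσmax
  · intro j
    have hms : ∀ s : ℝ, max s 0 - max (-s) 0 = s := by
      intro s
      rcases le_total s 0 with h | h
      · rw [max_eq_right h, max_eq_left (by linarith)]; ring
      · rw [max_eq_left h, max_eq_right (by linarith)]; ring
    norm_num
    have e2 := hms (max (xr j) 0 + -(2*max (a j) 0))
    have e4 := hms (max (-(xr j)) 0 + -(2*max (b j) 0))
    have exr := hms (xr j)
    rw [show -(max (xr j) 0 + -(2*max (a j) 0)) = -(max (xr j) 0) + 2*max (a j) 0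
      from by ring] at e2
    rw [show -(max (-(xr j)) 0 + -(2*max (b j) 0)) = -(max (-(xr j)) 0) + 2*max (b j) 0
      from by ring] at e4
    linarith
  · intro i
    have hkd : (i:ℕ) < 4*d0 := i.isLt
    have hjlt : (i:ℕ)/4 < d0 := by omega
    set j : Fin d0 := ⟨(i:ℕ)/4, hjlt⟩ with hjdef
    have hjv : (j:ℕ) = (i:ℕ)/4 := rfl
    have hcases : (i:ℕ) = 4*(j:ℕ) ∨ (i:ℕ) = 4*(j:ℕ)+1 ∨ (i:ℕ) = 4*(j:ℕ)+2 ∨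
        (i:ℕ) = 4*(j:ℕ)+3 := by rw [hjv]; omega
    rcases hcases with h | h | h | h
    · exact ⟨(hY0 i j h).2, by rw [(hY0 i j h).1]; exact finite_fin _⟩
    · exact ⟨(hY1 i j h).2, by rw [(hY1 i j h).1]; exact finite_fin _⟩
    · exact ⟨(hY2 i j h).2, by rw [(hY2 i j h).1]; exact finite_fin _⟩
    · exact ⟨(hY3 i j h).2, by rw [(hY3 i j h).1]; exact finite_fin _⟩
  · intro i
    have hkd : (i:ℕ) < 6*d0 := i.isLt
    have hjlt : (i:ℕ)/6 < d0 := by omega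
    set j : Fin d0 := ⟨(i:ℕ)/6, hjlt⟩ with hjdef
    have hjv : (j:ℕ) = (i:ℕ)/6 := rfl
    have hcases : (i:ℕ) = 6*(j:ℕ) ∨ (i:ℕ) = 6*(j:ℕ)+1 ∨ (i:ℕ) = 6*(j:ℕ)+2 ∨
        (i:ℕ) = 6*(j:ℕ)+3 ∨ (i:ℕ) = 6*(j:ℕ)+4 ∨ (i:ℕ) = 6*(j:ℕ)+5 := by rw [hjv]; omega
    rcases hcases with h | h | h | h | h | h
    · exact ⟨(hR0 i j h).2, by rw [(hR0 i j h).1]; exact finite_fin _⟩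
    · exact ⟨(hR1 i j h).2, by rw [(hR1 i j h).1]; exact finite_fin _⟩
    · exact ⟨(hR2 i j h).2, by rw [(hR2 i j h).1]; exact finite_fin _⟩
    · exact ⟨(hR3 i j h).2, by rw [(hR3 i j h).1]; exact finite_fin _⟩
    · exact ⟨(hR4 i j h).2, by rw [(hR4 i j h).1]; exact finite_fin _⟩
    · exact ⟨(hR5 i j h).2, by rw [(hR5 i j h).1]; exact finite_fin _⟩

lemma idx6 {d0 : ℕ} (i : Fin (6*d0)) : ∃ (j0 : Fin d0) (t0 : Fin 6),
    i = ⟨6*(j0:ℕ)+(t0:ℕ), by have := j0.isLt; have := t0.isLt; omega⟩ := by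
  have hkd : (i:ℕ) < 6*d0 := i.isLt
  have hjlt : (i:ℕ)/6 < d0 := by omega
  have htlt : (i:ℕ)%6 < 6 := Nat.mod_lt _ (by norm_num)
  exact ⟨⟨(i:ℕ)/6, hjlt⟩, ⟨(i:ℕ)%6, htlt⟩,
    Fin.ext (by show (i:ℕ) = 6*((i:ℕ)/6)+((i:ℕ)%6); omega)⟩

end FPT
end Aux

/-- Lemma `distinguish`. There is a two-layer floating-point ReLU
network that is injective on `𝔽^{d₀}`, has range in `([0, 2^emax] ∩ 𝔽)^{d₂}`, and whose
intermediate computations are all finite. -/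
theorem stmt16 (p q : ℕ) (hp : 2 ≤ p) (hpq : (p : ℤ) ≤ 2 ^ (q - 1) - 3) (d0 : ℕ)
    (hd0 : 0 < d0) :
    ∃ (d1 d2 : ℕ) (W1 : Fin d1 → Fin d0 → ℝ) (c1 : ℝ) (W2 : Fin d2 → Fin d1 → ℝ) (c2 : ℝ),
      (∀ i j, W1 i j ∈ FPT.Fset p q) ∧ c1 ∈ FPT.Fset p q ∧
      (∀ i j, W2 i j ∈ FPT.Fset p q) ∧ c2 ∈ FPT.Fset p q ∧
      (let f : (Fin d0 → FPT.EF) → Fin d2 → FPT.EF := fun x i =>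
        FPT.frelu p q (FPT.affApply p q W2 c2
          (fun j => FPT.frelu p q (FPT.affApply p q W1 c1 x j)) i)
      (∀ x y : Fin d0 → FPT.EF, FPT.VecFin p q x → FPT.VecFin p q y → f x = f y → x = y) ∧
      (∀ x : Fin d0 → FPT.EF, FPT.VecFin p q x → ∀ i : Fin d2,
        ∃ r : ℝ, f x i = .fin r ∧ r ∈ FPT.Fset p q ∧ 0 ≤ r ∧ r ≤ (2 : ℝ) ^ FPT.emax q) ∧
      (∀ x : Fin d0 → FPT.EF, FPT.VecFin p q x →
        FPT.AffIntermFin p q W1 c1 x ∧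
        FPT.AffIntermFin p q W2 c2 (fun j => FPT.frelu p q (FPT.affApply p q W1 c1 x j)))) := by
  have hE : (p:ℤ) + 2 ≤ FPT.emax q := FPT.emax_ge hp hpq
  have hq : FPT.emin q ≤ FPT.emax q := by rw [FPT.emin_eq]; omega
  refine ⟨4*d0, 6*d0, FPT.Wone d0, 0, FPT.Wtwo d0, 0,
    fun i j => FPT.Wone_mem hE i j, FPT.zero_mem hq,
    fun i j => FPT.Wtwo_mem hE i j, FPT.zero_mem hq, ?_, ?_, ?_⟩
  · -- injectivity
    intro x y hx hy hfeq
    obtain ⟨xr, O, hxr, hO, _, hrec, _, _⟩ := FPT.eval_main hp hE x hx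
    obtain ⟨yr, P, hyr, hP, _, hrecy, _, _⟩ := FPT.eval_main hp hE y hy
    funext j
    rw [hxr j, hyr j]
    have hOP : ∀ t : ℕ, (ht : t < 6) → O j t = P j t := by
      intro t ht
      have h : FPT.frelu p q (FPT.affApply p q (FPT.Wtwo d0) 0
            (fun k => FPT.frelu p q (FPT.affApply p q (FPT.Wone d0) 0 x k))
            ⟨6*(j:ℕ)+t, by have := j.isLt; omega⟩)
          = FPT.frelu p q (FPT.affApply p q (FPT.Wtwo d0) 0
            (fun k => FPT.frelu p q (FPT.affApply p q (FPT.Wone d0) 0 y k))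
            ⟨6*(j:ℕ)+t, by have := j.isLt; omega⟩) :=
        congrFun hfeq ⟨6*(j:ℕ)+t, by have := j.isLt; omega⟩
      rw [hO j t ht, hP j t ht] at h
      exact FPT.EF.fin.inj h
    have hx' := hrec j
    rw [hOP 0 (by omega), hOP 1 (by omega), hOP 2 (by omega), hOP 3 (by omega),
      hOP 4 (by omega), hOP 5 (by omega), ← hrecy j] at hx'
    rw [hx']
  · -- range
    intro x hx i
    obtain ⟨xr, O, hxr, hO, hb, hrec, _, _⟩ := FPT.eval_main hp hE x hx
    have hkd : (i:ℕ) < 6*d0 := i.isLt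
    have hjlt : (i:ℕ)/6 < d0 := by omega
    have htlt : (i:ℕ)%6 < 6 := Nat.mod_lt _ (by norm_num)
    obtain ⟨j0, t0, hieq⟩ := FPT.idx6 i
    subst hieq
    exact ⟨O j0 (t0:ℕ), hO j0 (t0:ℕ) t0.isLt, (hb j0 _ t0.isLt).1, (hb j0 _ t0.isLt).2.1,
      (hb j0 _ t0.isLt).2.2⟩
  · -- intermediate finiteness
    intro x hx
    obtain ⟨_, _, _, _, _, _, h5, h6⟩ := FPT.eval_main hp hE x hx
    exact ⟨h5, h6⟩
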